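/- arXiv:2101.03136 — 4 statements merged into one kernel-verified Lean document; each statement's English description precedes it below -/
import Mathlib

section
/- Let α ∈ [0,1) and M > 0 be fixed. Then, as τ → 0 within the cone {τ = u+iv : v > 0, |u| ≤ Mv}, one has ϑ(ατ; τ) = (−2i sin(πα) q^{−α²/2} q₀^{1/8} / √(−iτ)) · (1 + E(τ)), where there exist constants C, δ > 0 such that |E(τ)| ≤ C|q₀| for all τ in the cone with v < δ. -/
open Real Complex

/-- The Jacobi theta function
`ϑ(z;τ) = ∑_{m ∈ 1/2+ℤ} (-1)^m q^{m²/2} e^{2πimz}` with `(-1)^m := e^{πim}`. -/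
noncomputable def jtheta (z τ : ℂ) : ℂ :=
  ∑' n : ℤ, Complex.exp ((π : ℂ) * Complex.I * ((n : ℂ) + 1 / 2)) *
    Complex.exp ((π : ℂ) * Complex.I * τ * ((n : ℂ) + 1 / 2) ^ 2) *
    Complex.exp (2 * (π : ℂ) * Complex.I * ((n : ℂ) + 1 / 2) * z)

lemma jtheta_eq_jacobiTheta₂ (z τ : ℂ) :
    jtheta z τ = Complex.exp ((π : ℂ) * I * τ / 4 + (π : ℂ) * I * (z + 1 / 2)) *
      jacobiTheta₂ (z + 1 / 2 + τ / 2) τ := by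
  rw [jacobiTheta₂, ← tsum_mul_left]
  refine tsum_congr fun n => ?_
  rw [jacobiTheta₂_term, ← Complex.exp_add, ← Complex.exp_add, ← Complex.exp_add]
  congr 1
  ring

lemma jtheta₂_term_formula (α : ℝ) (τ : ℂ) (hτ : τ ≠ 0) (n : ℤ) :
    jacobiTheta₂_term n ((α : ℂ) + 1 / 2 + 1 / (2 * τ)) (-1 / τ) =
      Complex.exp (2 * (π : ℂ) * I * n * ((α : ℂ) + 1 / 2)) *
        Complex.exp (-(π : ℂ) * I / τ) ^ (n * (n - 1)) := by
  rw [jacobiTheta₂_term, ← Complex.exp_int_mul, ← Complex.exp_add]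
  congr 1
  push_cast
  field_simp
  ring

lemma jtheta_zero (τ : ℂ) : jtheta 0 τ = 0 := by
  set f : ℤ → ℂ := fun n => Complex.exp ((π : ℂ) * Complex.I * ((n : ℂ) + 1 / 2)) *
    Complex.exp ((π : ℂ) * Complex.I * τ * ((n : ℂ) + 1 / 2) ^ 2) *
    Complex.exp (2 * (π : ℂ) * Complex.I * ((n : ℂ) + 1 / 2) * 0) with hf
  have hkey : ∀ n : ℤ, f (-1 - n) = - f n := by
    intro n
    have h1 : Complex.exp ((π : ℂ) * I * (((-1 - n : ℤ) : ℂ) + 1 / 2)) =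
        - Complex.exp ((π : ℂ) * I * ((n : ℂ) + 1 / 2)) := by
      rw [show (π : ℂ) * I * (((-1 - n : ℤ) : ℂ) + 1 / 2) =
        (π : ℂ) * I * ((n : ℂ) + 1 / 2) + π * I + ((-n - 1 : ℤ) : ℂ) * (2 * π * I) by
          push_cast; ring]
      rw [Complex.exp_add, Complex.exp_add, Complex.exp_int_mul_two_pi_mul_I,
        Complex.exp_pi_mul_I]
      ring
    have h2 : Complex.exp ((π : ℂ) * I * τ * (((-1 - n : ℤ) : ℂ) + 1 / 2) ^ 2) =
        Complex.exp ((π : ℂ) * I * τ * ((n : ℂ) + 1 / 2) ^ 2) := by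
      congr 1; push_cast; ring
    have h3 : Complex.exp (2 * (π : ℂ) * Complex.I * (((-1 - n : ℤ) : ℂ) + 1 / 2) * 0) =
        Complex.exp (2 * (π : ℂ) * Complex.I * ((n : ℂ) + 1 / 2) * 0) := by
      congr 1; ring
    simp only [hf, h1, h2, h3]
    ring
  have heq := (Equiv.subLeft (-1 : ℤ)).tsum_eq f
  have h4 : ∑' n : ℤ, f ((Equiv.subLeft (-1 : ℤ)) n) = ∑' n : ℤ, - f n :=
    tsum_congr fun n => by rw [Equiv.subLeft_apply]; exact hkey n
  rw [h4, tsum_neg] at heq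
  have : jtheta 0 τ = ∑' n : ℤ, f n := rfl
  rw [this]
  have h2 : (2 : ℂ) * (∑' n : ℤ, f n) = 0 := by linear_combination -heq
  simpa using h2

set_option maxHeartbeats 1000000 in
/-- As `τ → 0` in a cone,
`ϑ(ατ;τ) = (-2i sin(πα) q^{-α²/2} q₀^{1/8} / √(-iτ)) (1 + O(q₀))`. -/
theorem jtheta_alpha_tau_asymp (α M : ℝ) (hα0 : 0 ≤ α) (hα1 : α < 1) (hM : 0 < M) :
    ∃ C > (0 : ℝ), ∃ δ > (0 : ℝ), ∀ u v : ℝ, 0 < v → |u| ≤ M * v → v < δ →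
      ∃ E : ℂ,
        jtheta ((α : ℂ) * ((u : ℂ) + (v : ℂ) * Complex.I)) ((u : ℂ) + (v : ℂ) * Complex.I) =
          ((-2) * Complex.I * ((Real.sin (π * α) : ℝ) : ℂ) *
            Complex.exp (-(π : ℂ) * Complex.I * ((u : ℂ) + (v : ℂ) * Complex.I) * (α : ℂ) ^ 2) *
            Complex.exp (-(π : ℂ) * Complex.I / (4 * ((u : ℂ) + (v : ℂ) * Complex.I))) /
            (-Complex.I * ((u : ℂ) + (v : ℂ) * Complex.I)) ^ ((1 : ℂ) / 2)) * (1 + E) ∧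
        ‖E‖ ≤ C * ‖Complex.exp (-2 * (π : ℂ) * Complex.I / ((u : ℂ) + (v : ℂ) * Complex.I))‖ := by
  have hπ := Real.pi_pos
  refine ⟨max 1 (2 / Real.sin (π * α)), lt_of_lt_of_le one_pos (le_max_left _ _),
    (M ^ 2 + 1)⁻¹, by positivity, ?_⟩
  intro u v hv hu hvδ
  set τ : ℂ := (u : ℂ) + (v : ℂ) * I with hτdef
  have hτre : τ.re = u := by simp [hτdef]
  have hτim : τ.im = v := by simp [hτdef]
  have hτpos : 0 < τ.im := by rw [hτim]; exact hv
  have hτne : τ ≠ 0 := by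
    intro h; rw [h, Complex.zero_im] at hτim; exact absurd hτim.symm (ne_of_gt hv)
  -- bound on r = ‖q₀‖
  set r : ℝ := ‖Complex.exp (-2 * (π : ℂ) * I / τ)‖ with hrdef
  have hr0 : 0 ≤ r := norm_nonneg _
  have hden : (0 : ℝ) < u ^ 2 + v ^ 2 := by positivity
  have hre : (-2 * (π : ℂ) * I / τ).re = -2 * π * v / (u ^ 2 + v ^ 2) := by
    rw [Complex.div_re, Complex.normSq_apply, hτre, hτim]
    simp
    ring
  have hrval : r = Real.exp (-2 * π * v / (u ^ 2 + v ^ 2)) := by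
    rw [hrdef, Complex.norm_exp, hre]
  have hlt : u ^ 2 + v ^ 2 < v := by
    have h1 : u ^ 2 ≤ (M * v) ^ 2 := by
      rw [← _root_.sq_abs u]; exact pow_le_pow_left₀ (abs_nonneg u) hu 2
    have h2 : (M ^ 2 + 1) * v < 1 := by
      calc (M ^ 2 + 1) * v < (M ^ 2 + 1) * (M ^ 2 + 1)⁻¹ :=
            mul_lt_mul_of_pos_left hvδ (show (0:ℝ) < M ^ 2 + 1 by positivity)
        _ = 1 := mul_inv_cancel₀ (by positivity)
    nlinarith
  have hrhalf : r ≤ 1 / 2 := by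
    rw [hrval]
    have hx : -2 * π * v / (u ^ 2 + v ^ 2) ≤ -1 := by
      rw [div_le_iff₀ hden]; nlinarith [Real.pi_gt_three]
    calc Real.exp (-2 * π * v / (u ^ 2 + v ^ 2)) ≤ Real.exp (-1) := Real.exp_le_exp.mpr hx
      _ ≤ 1 / 2 := by
        have h2 : (2 : ℝ) ≤ Real.exp 1 := by
          have := Real.add_one_le_exp (1 : ℝ); linarith
        have h3 : Real.exp (-1) * Real.exp 1 = 1 := by
          rw [← Real.exp_add]; norm_num
        nlinarith [Real.exp_pos (-1)]
  -- s = q₀^{1/2}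
  set s : ℂ := Complex.exp (-(π : ℂ) * I / τ) with hsdef
  have hs2 : s ^ 2 = Complex.exp (-2 * (π : ℂ) * I / τ) := by
    rw [hsdef, sq, ← Complex.exp_add]; congr 1; ring
  have hσ : ‖s‖ ^ 2 = r := by rw [← norm_pow, hs2]
  have hσ0 : (0 : ℝ) ≤ ‖s‖ := norm_nonneg s
  have hσ1 : ‖s‖ ≤ 1 := by nlinarith
  have hτ'pos : 0 < (-1 / τ).im := by
    rw [show (-1 / τ) = -τ⁻¹ by ring, Complex.neg_im, Complex.inv_im]
    rw [neg_div, neg_neg]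
    exact div_pos hτpos (Complex.normSq_pos.mpr hτne)
  set w : ℂ := (α : ℂ) + 1 / 2 + 1 / (2 * τ) with hwdef
  set g : ℤ → ℂ := fun n => jacobiTheta₂_term n w (-1 / τ) with hgdef
  have hterm : ∀ n : ℤ, g n =
      Complex.exp (2 * (π : ℂ) * I * n * ((α : ℂ) + 1 / 2)) * s ^ (n * (n - 1)) := by
    intro n
    rw [hgdef, hsdef, hwdef]
    exact jtheta₂_term_formula α τ hτne n
  have hgsum : Summable g := (summable_jacobiTheta₂_term_iff w _).mpr hτ'pos
  have hnormg : ∀ n : ℤ, ∀ m : ℕ, n * (n - 1) = (m : ℤ) → ‖g n‖ = ‖s‖ ^ m := by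
    intro n m hm
    rw [hterm n, norm_mul, hm, zpow_natCast, norm_pow]
    rw [show 2 * (π : ℂ) * I * (n : ℂ) * ((α : ℂ) + 1 / 2) =
      ((2 * π * (n : ℝ) * (α + 1 / 2) : ℝ) : ℂ) * I by push_cast; ring]
    rw [Complex.norm_exp_ofReal_mul_I, one_mul]
  have htail : ∀ k : ℕ, ‖s‖ ^ ((k + 2) * (k + 1)) ≤ r * (1 / 2) ^ k := by
    intro k
    calc ‖s‖ ^ ((k + 2) * (k + 1)) ≤ ‖s‖ ^ (2 * (k + 1)) :=
          pow_le_pow_of_le_one hσ0 hσ1 (by nlinarith)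
      _ = (‖s‖ ^ 2) ^ (k + 1) := by rw [← pow_mul]
      _ = r ^ (k + 1) := by rw [hσ]
      _ = r * r ^ k := by ring
      _ ≤ r * (1 / 2) ^ k :=
          mul_le_mul_of_nonneg_left (pow_le_pow_left₀ hr0 hrhalf k) hr0
  have hnat : Summable (fun k : ℕ => g k) := hgsum.comp_injective Nat.cast_injective
  have hneg : Summable (fun k : ℕ => g (-((k : ℤ) + 1))) :=
    hgsum.comp_injective (fun a b h => by omega)
  have hsum2 : Summable (fun k : ℕ => g ((k : ℤ) + 2)) :=
    hgsum.comp_injective (fun a b h => by omega)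
  have hsplit := tsum_of_nat_of_neg_add_one hnat hneg
  have hpeel : ∑' k : ℕ, g k = g 0 + (g 1 + ∑' k : ℕ, g ((k : ℤ) + 2)) := by
    rw [Summable.tsum_eq_zero_add hnat, Summable.tsum_eq_zero_add ((summable_nat_add_iff 1).mpr hnat)]
    push_cast
    exact congrArg (fun x => g 0 + (g 1 + x)) (tsum_congr fun k => by congr 1 <;> push_cast <;> ring)
  have hg0 : g 0 = 1 := by rw [hterm 0]; norm_num
  have hg1 : g 1 = -Complex.exp (2 * (π : ℂ) * I * α) := by
    rw [hterm 1]
    norm_num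
    rw [show 2 * (π : ℂ) * I * ((α : ℂ) + 1 / 2) = 2 * π * I * α + π * I by ring,
      Complex.exp_add, Complex.exp_pi_mul_I]
    ring
  set T : ℂ := (∑' k : ℕ, g ((k : ℤ) + 2)) + ∑' k : ℕ, g (-((k : ℤ) + 1)) with hTdef
  have hS : jacobiTheta₂ w (-1 / τ) = 1 - Complex.exp (2 * (π : ℂ) * I * α) + T := by
    rw [show jacobiTheta₂ w (-1 / τ) = ∑' n : ℤ, g n from rfl, hsplit, hpeel, hg0, hg1, hTdef]
    ring
  have hb1 : ‖∑' k : ℕ, g ((k : ℤ) + 2)‖ ≤ 2 * r := by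
    have hbound : ∀ k : ℕ, ‖g ((k : ℤ) + 2)‖ ≤ r * (1 / 2) ^ k := fun k => by
      rw [hnormg ((k : ℤ) + 2) ((k + 2) * (k + 1)) (by push_cast; ring)]
      exact htail k
    calc ‖∑' k : ℕ, g ((k : ℤ) + 2)‖ ≤ ∑' k : ℕ, ‖g ((k : ℤ) + 2)‖ :=
          norm_tsum_le_tsum_norm (summable_norm_iff.mpr hsum2)
      _ ≤ ∑' k : ℕ, r * (1 / 2) ^ k := Summable.tsum_le_tsum hbound (summable_norm_iff.mpr hsum2)
            ((summable_geometric_of_lt_one (by norm_num) (by norm_num)).mul_left r)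
      _ = r * (1 - 1 / 2)⁻¹ := by
          rw [tsum_mul_left, tsum_geometric_of_lt_one (by norm_num) (by norm_num)]
      _ = 2 * r := by ring
  have hb2 : ‖∑' k : ℕ, g (-((k : ℤ) + 1))‖ ≤ 2 * r := by
    have hbound : ∀ k : ℕ, ‖g (-((k : ℤ) + 1))‖ ≤ r * (1 / 2) ^ k := fun k => by
      rw [hnormg (-((k : ℤ) + 1)) ((k + 2) * (k + 1)) (by push_cast; ring)]
      exact htail k
    calc ‖∑' k : ℕ, g (-((k : ℤ) + 1))‖ ≤ ∑' k : ℕ, ‖g (-((k : ℤ) + 1))‖ :=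
          norm_tsum_le_tsum_norm (summable_norm_iff.mpr hneg)
      _ ≤ ∑' k : ℕ, r * (1 / 2) ^ k := Summable.tsum_le_tsum hbound (summable_norm_iff.mpr hneg)
            ((summable_geometric_of_lt_one (by norm_num) (by norm_num)).mul_left r)
      _ = r * (1 - 1 / 2)⁻¹ := by
          rw [tsum_mul_left, tsum_geometric_of_lt_one (by norm_num) (by norm_num)]
      _ = 2 * r := by ring
  have hT : ‖T‖ ≤ 4 * r := by
    calc ‖T‖ ≤ ‖∑' k : ℕ, g ((k : ℤ) + 2)‖ + ‖∑' k : ℕ, g (-((k : ℤ) + 1))‖ := norm_add_le _ _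
      _ ≤ 2 * r + 2 * r := add_le_add hb1 hb2
      _ = 4 * r := by ring
  -- assemble via the functional equation
  have harg : ((α : ℂ) * τ + 1 / 2 + τ / 2) / τ = w := by
    rw [hwdef]; field_simp; ring
  have heq : jtheta ((α : ℂ) * τ) τ =
      1 / (-I * τ) ^ ((1 : ℂ) / 2) * Complex.exp (-(π : ℂ) * I * τ * (α : ℂ) ^ 2) *
        Complex.exp (-(π : ℂ) * I / (4 * τ)) *
        (Complex.exp (-(π : ℂ) * I * α) * jacobiTheta₂ w (-1 / τ)) := by
    rw [jtheta_eq_jacobiTheta₂, jacobiTheta₂_functional_equation, harg]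
    have hexp : Complex.exp ((π : ℂ) * I * τ / 4 + (π : ℂ) * I * ((α : ℂ) * τ + 1 / 2)) *
        Complex.exp (-(π : ℂ) * I * ((α : ℂ) * τ + 1 / 2 + τ / 2) ^ 2 / τ) =
        Complex.exp (-(π : ℂ) * I * τ * (α : ℂ) ^ 2) * Complex.exp (-(π : ℂ) * I / (4 * τ)) *
          Complex.exp (-(π : ℂ) * I * α) := by
      rw [← Complex.exp_add, ← Complex.exp_add, ← Complex.exp_add]
      congr 1
      field_simp
      ring
    linear_combination (1 / (-I * τ) ^ ((1 : ℂ) / 2)) * jacobiTheta₂ w (-1 / τ) * hexp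
  rcases eq_or_lt_of_le hα0 with h0 | h0
  · -- α = 0 : both sides vanish
    refine ⟨0, ?_, ?_⟩
    · rw [← h0]
      norm_num
      rw [jtheta_zero]
    · rw [norm_zero]
      exact mul_nonneg (le_trans zero_le_one (le_max_left 1 (2 / Real.sin (π * α))))
        (norm_nonneg _)
  · -- 0 < α
    have hsinpos : 0 < Real.sin (π * α) :=
      Real.sin_pos_of_pos_of_lt_pi (by positivity) (by nlinarith [mul_lt_mul_of_pos_left hα1 hπ])
    set D : ℂ := (-2) * I * ((Real.sin (π * α) : ℝ) : ℂ) with hDdef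
    have hDne : D ≠ 0 := by
      rw [hDdef]
      exact mul_ne_zero (mul_ne_zero (by norm_num) I_ne_zero)
        (Complex.ofReal_ne_zero.mpr (ne_of_gt hsinpos))
    set e₀ : ℂ := Complex.exp (-(π : ℂ) * I * α) with he₀def
    refine ⟨e₀ * T / D, ?_, ?_⟩
    · have hsin2 : D = e₀ - Complex.exp ((π : ℂ) * I * α) := by
        rw [hDdef, he₀def, Complex.ofReal_sin, Complex.sin]
        push_cast
        rw [show -(((π : ℝ) : ℂ) * (α : ℂ)) * I = -(π : ℂ) * I * α by ring,
            show (((π : ℝ) : ℂ) * (α : ℂ)) * I = (π : ℂ) * I * α by ring]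
        linear_combination (Complex.exp ((π : ℂ) * I * (α : ℂ)) -
          Complex.exp (-(π : ℂ) * I * (α : ℂ))) * Complex.I_sq
      have hmul : e₀ * Complex.exp (2 * (π : ℂ) * I * α) = Complex.exp ((π : ℂ) * I * α) := by
        rw [he₀def, ← Complex.exp_add]; congr 1; ring
      have h1 : D * (1 + e₀ * T / D) = D + e₀ * T := by
        rw [mul_add, mul_one, mul_comm D (e₀ * T / D), div_mul_cancel₀ _ hDne]
      have hkey : D * (1 + e₀ * T / D) = e₀ * jacobiTheta₂ w (-1 / τ) := by
        rw [h1, hS, hsin2]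
        linear_combination hmul
      rw [heq, ← hkey]
      ring
    · have hnorme : ‖e₀‖ = 1 := by
        rw [he₀def, show -(π : ℂ) * I * (α : ℂ) = ((-(π * α) : ℝ) : ℂ) * I by push_cast; ring,
          Complex.norm_exp_ofReal_mul_I]
      have hnormD : ‖D‖ = 2 * Real.sin (π * α) := by
        rw [hDdef]
        simp only [norm_mul, Complex.norm_I, Complex.norm_real, Real.norm_eq_abs]
        rw [abs_of_pos hsinpos]
        norm_num
      calc ‖e₀ * T / D‖ = ‖T‖ / (2 * Real.sin (π * α)) := by
            rw [norm_div, norm_mul, hnorme, hnormD, one_mul]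
        _ ≤ 4 * r / (2 * Real.sin (π * α)) :=
            div_le_div_of_nonneg_right hT (by linarith [hsinpos])
        _ = 2 / Real.sin (π * α) * r := by field_simp; ring
        _ ≤ max 1 (2 / Real.sin (π * α)) * r :=
            mul_le_mul_of_nonneg_right (le_max_right _ _) hr0
end

section
/- Let α ∈ [0,1) and M > 0 be fixed. Then, as τ → 0 within the cone {τ = u+iv : v > 0, |u| ≤ Mv}, one has ϑ(1/2 + ατ; τ) = −(q^{−α²/2} / √(−iτ)) · (1 − 2cos(2πα) q₀^{1/2} + 2cos(4πα) q₀² + E(τ)), where there exist constants C, δ > 0 such that |E(τ)| ≤ C|q₀|⁴ for all τ in the cone with v < δ. -/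
open Real Complex

lemma two_cos_eq (θ : ℝ) : ((2 * Real.cos θ : ℝ) : ℂ) =
    Complex.exp ((θ : ℂ) * I) + Complex.exp (-(θ : ℂ) * I) := by
  push_cast
  rw [Complex.cos]
  ring

lemma expand_bound : ∃ C > (0 : ℝ), ∀ (α : ℝ) (τ₀ : ℂ), 1 ≤ τ₀.im →
    ‖jacobiTheta₂ ((α : ℂ) + 1 / 2) τ₀ -
      (1 - ((2 * Real.cos (2 * π * α) : ℝ) : ℂ) * Complex.exp ((π : ℂ) * I * τ₀)
         + ((2 * Real.cos (4 * π * α) : ℝ) : ℂ) * Complex.exp ((π : ℂ) * I * τ₀) ^ 4)‖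
      ≤ C * Real.exp (-8 * π * τ₀.im) := by
  have hgsum : Summable fun n : ℤ => Real.exp (-π * ((n : ℝ) ^ 2 - 8)) := by
    have h := summable_pow_mul_jacobiTheta₂_term_bound 0 one_pos 0
    simp only [pow_zero, one_mul, mul_zero, zero_mul, sub_zero] at h
    have := h.mul_left (Real.exp (8 * π))
    refine this.congr fun n => ?_
    rw [← Real.exp_add]
    congr 1
    ring
  set G : ℝ := ∑' n : ℤ, Real.exp (-π * ((n : ℝ) ^ 2 - 8)) with hG
  have hG0 : 0 ≤ G := tsum_nonneg fun n => (Real.exp_pos _).le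
  refine ⟨G + 1, by linarith, fun α τ₀ h1 => ?_⟩
  have hτ0 : 0 < τ₀.im := by linarith
  set f : ℤ → ℂ := fun n => jacobiTheta₂_term n ((α : ℂ) + 1 / 2) τ₀ with hf
  have hsum : Summable f := (summable_jacobiTheta₂_term_iff _ _).2 hτ0
  set s : Finset ℤ := {-2, -1, 0, 1, 2} with hs
  have hsplit : (∑ n ∈ s, f n) + ∑' n : {x // x ∉ s}, f n = ∑' n, f n :=
    Summable.sum_add_tsum_subtype_compl hsum s
  have hval : ∑ n ∈ s, f n =
      1 - ((2 * Real.cos (2 * π * α) : ℝ) : ℂ) * Complex.exp ((π : ℂ) * I * τ₀)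
        + ((2 * Real.cos (4 * π * α) : ℝ) : ℂ) * Complex.exp ((π : ℂ) * I * τ₀) ^ 4 := by
    rw [hs]
    rw [Finset.sum_insert (by decide), Finset.sum_insert (by decide),
      Finset.sum_insert (by decide), Finset.sum_insert (by decide), Finset.sum_singleton]
    have h0 : f 0 = 1 := by simp [hf, jacobiTheta₂_term]
    have h1 : f 1 = -(Complex.exp (((2 * π * α : ℝ) : ℂ) * I) * Complex.exp ((π : ℂ) * I * τ₀)) := by
      simp only [hf]
      rw [jacobiTheta₂_term,
        show 2 * (π : ℂ) * I * ((1 : ℤ) : ℂ) * ((α : ℂ) + 1 / 2) + (π : ℂ) * I * ((1 : ℤ) : ℂ) ^ 2 * τ₀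
          = ((2 * π * α : ℝ) : ℂ) * I + ((π : ℂ) * I + (π : ℂ) * I * τ₀) by push_cast; ring,
        Complex.exp_add, Complex.exp_add, Complex.exp_pi_mul_I]
      ring
    have hm1 : f (-1) = -(Complex.exp (-((2 * π * α : ℝ) : ℂ) * I) * Complex.exp ((π : ℂ) * I * τ₀)) := by
      have : Complex.exp (-((π : ℂ) * I)) = -1 := by
        rw [Complex.exp_neg, Complex.exp_pi_mul_I]; norm_num
      simp only [hf]
      rw [jacobiTheta₂_term,
        show 2 * (π : ℂ) * I * ((-1 : ℤ) : ℂ) * ((α : ℂ) + 1 / 2) + (π : ℂ) * I * ((-1 : ℤ) : ℂ) ^ 2 * τ₀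
          = -((2 * π * α : ℝ) : ℂ) * I + (-((π : ℂ) * I) + (π : ℂ) * I * τ₀) by push_cast; ring,
        Complex.exp_add, Complex.exp_add, this]
      ring
    have h2 : f 2 = Complex.exp (((4 * π * α : ℝ) : ℂ) * I) * Complex.exp ((π : ℂ) * I * τ₀) ^ 4 := by
      simp only [hf]
      rw [jacobiTheta₂_term,
        show 2 * (π : ℂ) * I * ((2 : ℤ) : ℂ) * ((α : ℂ) + 1 / 2) + (π : ℂ) * I * ((2 : ℤ) : ℂ) ^ 2 * τ₀
          = ((4 * π * α : ℝ) : ℂ) * I + (2 * (π : ℂ) * I + (4 : ℕ) * ((π : ℂ) * I * τ₀)) by push_cast; ring,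
        Complex.exp_add, Complex.exp_add, Complex.exp_two_pi_mul_I, Complex.exp_nat_mul]
      ring
    have hm2 : f (-2) = Complex.exp (-((4 * π * α : ℝ) : ℂ) * I) * Complex.exp ((π : ℂ) * I * τ₀) ^ 4 := by
      have : Complex.exp (-(2 * (π : ℂ) * I)) = 1 := by
        rw [Complex.exp_neg, Complex.exp_two_pi_mul_I]; norm_num
      simp only [hf]
      rw [jacobiTheta₂_term,
        show 2 * (π : ℂ) * I * ((-2 : ℤ) : ℂ) * ((α : ℂ) + 1 / 2) + (π : ℂ) * I * ((-2 : ℤ) : ℂ) ^ 2 * τ₀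
          = -((4 * π * α : ℝ) : ℂ) * I + (-(2 * (π : ℂ) * I) + (4 : ℕ) * ((π : ℂ) * I * τ₀)) by push_cast; ring,
        Complex.exp_add, Complex.exp_add, this, Complex.exp_nat_mul]
      ring
    rw [h0, h1, hm1, h2, hm2, two_cos_eq, two_cos_eq]
    push_cast
    ring
  have heq : jacobiTheta₂ ((α : ℂ) + 1 / 2) τ₀ -
      (1 - ((2 * Real.cos (2 * π * α) : ℝ) : ℂ) * Complex.exp ((π : ℂ) * I * τ₀)
        + ((2 * Real.cos (4 * π * α) : ℝ) : ℂ) * Complex.exp ((π : ℂ) * I * τ₀) ^ 4)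
      = ∑' n : {x // x ∉ s}, f n := by
    rw [← hval, jacobiTheta₂, ← hsplit]
    ring
  rw [heq]
  -- bound the tail
  have hnormf : ∀ n : ℤ, ‖f n‖ = Real.exp (-π * (n : ℝ) ^ 2 * τ₀.im) := by
    intro n
    rw [hf, norm_jacobiTheta₂_term]
    norm_num
  have hbig : ∀ n : {x : ℤ // x ∉ s}, (9 : ℝ) ≤ ((n : ℤ) : ℝ) ^ 2 := by
    rintro ⟨n, hn⟩
    simp only [hs, Finset.mem_insert, Finset.mem_singleton] at hn
    push_neg at hn
    have h9 : (9 : ℤ) ≤ n ^ 2 := by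
      rcases le_or_gt n (-3) with h | h
      · nlinarith
      · have : 3 ≤ n := by omega
        nlinarith
    exact_mod_cast h9
  have hpt : ∀ n : {x : ℤ // x ∉ s}, ‖f (n : ℤ)‖ ≤
      Real.exp (-8 * π * τ₀.im) * Real.exp (-π * (((n : ℤ) : ℝ) ^ 2 - 8)) := by
    intro n
    rw [hnormf, ← Real.exp_add]
    apply Real.exp_le_exp.2
    have h9 := hbig n
    have key : 0 ≤ π * ((((n : ℤ) : ℝ)) ^ 2 - 8) * (τ₀.im - 1) :=
      mul_nonneg (mul_nonneg pi_pos.le (by linarith)) (by linarith)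
    nlinarith [key]
  calc ‖∑' n : {x // x ∉ s}, f n‖ ≤ ∑' n : {x // x ∉ s}, ‖f (n : ℤ)‖ :=
        norm_tsum_le_tsum_norm (hsum.norm.subtype _)
    _ ≤ ∑' n : {x : ℤ // x ∉ s}, Real.exp (-8 * π * τ₀.im) * Real.exp (-π * (((n : ℤ) : ℝ) ^ 2 - 8)) :=
        Summable.tsum_le_tsum hpt (hsum.norm.subtype _) ((hgsum.mul_left _).subtype _)
    _ = Real.exp (-8 * π * τ₀.im) * ∑' n : {x : ℤ // x ∉ s}, Real.exp (-π * (((n : ℤ) : ℝ) ^ 2 - 8)) :=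
        tsum_mul_left
    _ ≤ Real.exp (-8 * π * τ₀.im) * G := by
        apply mul_le_mul_of_nonneg_left _ (Real.exp_pos _).le
        exact Summable.tsum_subtype_le (fun n : ℤ => Real.exp (-π * ((n : ℝ) ^ 2 - 8))) _
          (fun _ => (Real.exp_pos _).le) hgsum
    _ ≤ (G + 1) * Real.exp (-8 * π * τ₀.im) := by
        rw [mul_comm]
        have := (Real.exp_pos (-8 * π * τ₀.im)).le
        nlinarith

lemma jtheta_eq (z τ : ℂ) :
    jtheta z τ = Complex.exp ((π : ℂ) * I / 2 + (π : ℂ) * I * τ / 4 + (π : ℂ) * I * z) *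
      jacobiTheta₂ (z + τ / 2 + 1 / 2) τ := by
  unfold jtheta jacobiTheta₂ jacobiTheta₂_term
  rw [← tsum_mul_left]
  refine tsum_congr fun n => ?_
  rw [← Complex.exp_add, ← Complex.exp_add, ← Complex.exp_add]
  congr 1
  ring

/-- Higher order expansion: as `τ → 0` in a cone,
`ϑ(1/2 + ατ;τ) = -(q^{-α²/2}/√(-iτ)) (1 - 2cos(2πα) q₀^{1/2} + 2cos(4πα) q₀² + O(q₀⁴))`. -/
theorem jtheta_half_shift_higher_asymp (α M : ℝ) (hα0 : 0 ≤ α) (hα1 : α < 1) (hM : 0 < M) :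
    ∃ C > (0 : ℝ), ∃ δ > (0 : ℝ), ∀ u v : ℝ, 0 < v → |u| ≤ M * v → v < δ →
      ∃ E : ℂ,
        jtheta (1 / 2 + (α : ℂ) * ((u : ℂ) + (v : ℂ) * Complex.I))
            ((u : ℂ) + (v : ℂ) * Complex.I) =
          -(Complex.exp (-(π : ℂ) * Complex.I * ((u : ℂ) + (v : ℂ) * Complex.I) * (α : ℂ) ^ 2) /
            (-Complex.I * ((u : ℂ) + (v : ℂ) * Complex.I)) ^ ((1 : ℂ) / 2)) *
          (1 - ((2 * Real.cos (2 * π * α) : ℝ) : ℂ) *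
              Complex.exp (-(π : ℂ) * Complex.I / ((u : ℂ) + (v : ℂ) * Complex.I)) +
            ((2 * Real.cos (4 * π * α) : ℝ) : ℂ) *
              Complex.exp (-2 * (π : ℂ) * Complex.I / ((u : ℂ) + (v : ℂ) * Complex.I)) ^ 2 + E) ∧
        ‖E‖ ≤ C * ‖Complex.exp (-2 * (π : ℂ) * Complex.I /
          ((u : ℂ) + (v : ℂ) * Complex.I))‖ ^ 4 := by
  obtain ⟨C, hC, hEx⟩ := expand_bound
  refine ⟨C, hC, 1 / (M ^ 2 + 1), by positivity, fun u v hv hu hvδ => ?_⟩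
  set τ : ℂ := (u : ℂ) + (v : ℂ) * I with hτdef
  have hτim : τ.im = v := by simp [hτdef]
  have hτ0 : τ ≠ 0 := by
    intro h
    rw [h] at hτim
    simp at hτim
    linarith
  set τ₀ : ℂ := -1 / τ with hτ₀def
  have hns : Complex.normSq τ = u ^ 2 + v ^ 2 := by
    rw [hτdef, Complex.normSq_add_mul_I]
  have hτ₀im : τ₀.im = v / (u ^ 2 + v ^ 2) := by
    rw [hτ₀def, neg_div, one_div, Complex.neg_im, Complex.inv_im, hns, hτim]
    ring
  have hu2 : u ^ 2 ≤ M ^ 2 * v ^ 2 := by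
    have h := mul_self_le_mul_self (abs_nonneg u) hu
    rw [abs_mul_abs_self] at h
    nlinarith
  have h1 : 1 ≤ τ₀.im := by
    rw [hτ₀im, le_div_iff₀ (by positivity)]
    have : (M ^ 2 + 1) * v < 1 := by
      rw [lt_div_iff₀ (by positivity)] at hvδ
      nlinarith
    nlinarith
  have hτ₀pos : 0 < τ₀.im := by linarith
  -- main transformation
  have key := jtheta_eq (1 / 2 + (α : ℂ) * τ) τ
  rw [show 1 / 2 + (α : ℂ) * τ + τ / 2 + 1 / 2 = τ * ((α : ℂ) + 1 / 2) + 1 by ring,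
    jacobiTheta₂_add_left, jacobiTheta₂_functional_equation (τ * ((α : ℂ) + 1 / 2)) τ,
    mul_div_cancel_left₀ _ hτ0, ← hτ₀def] at key
  set S : ℂ := jacobiTheta₂ ((α : ℂ) + 1 / 2) τ₀ with hS
  have hexp : Complex.exp ((π : ℂ) * I / 2 + (π : ℂ) * I * τ / 4 +
        (π : ℂ) * I * (1 / 2 + (α : ℂ) * τ)) *
      Complex.exp (-(π : ℂ) * I * (τ * ((α : ℂ) + 1 / 2)) ^ 2 / τ) =
      -Complex.exp (-(π : ℂ) * I * τ * (α : ℂ) ^ 2) := by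
    rw [← Complex.exp_add,
      show (π : ℂ) * I / 2 + (π : ℂ) * I * τ / 4 + (π : ℂ) * I * (1 / 2 + (α : ℂ) * τ) +
          -(π : ℂ) * I * (τ * ((α : ℂ) + 1 / 2)) ^ 2 / τ
        = (π : ℂ) * I + -(π : ℂ) * I * τ * (α : ℂ) ^ 2 by field_simp; ring,
      Complex.exp_add, Complex.exp_pi_mul_I]
    ring
  have hful : jtheta (1 / 2 + (α : ℂ) * τ) τ =
      -(Complex.exp (-(π : ℂ) * I * τ * (α : ℂ) ^ 2) / (-I * τ) ^ ((1 : ℂ) / 2)) * S := by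
    rw [key, show Complex.exp ((π : ℂ) * I / 2 + (π : ℂ) * I * τ / 4 +
        (π : ℂ) * I * (1 / 2 + (α : ℂ) * τ)) *
        (1 / (-I * τ) ^ ((1 : ℂ) / 2) * Complex.exp (-(π : ℂ) * I * (τ * ((α : ℂ) + 1 / 2)) ^ 2 / τ) * S)
      = (Complex.exp ((π : ℂ) * I / 2 + (π : ℂ) * I * τ / 4 + (π : ℂ) * I * (1 / 2 + (α : ℂ) * τ)) *
          Complex.exp (-(π : ℂ) * I * (τ * ((α : ℂ) + 1 / 2)) ^ 2 / τ)) *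
          (1 / (-I * τ) ^ ((1 : ℂ) / 2)) * S by ring, hexp]
    ring
  -- identify the q₀ powers
  have ha : Complex.exp (-(π : ℂ) * I / τ) = Complex.exp ((π : ℂ) * I * τ₀) := by
    rw [hτ₀def]
    congr 1
    ring
  have hb : Complex.exp (-2 * (π : ℂ) * I / τ) = Complex.exp ((π : ℂ) * I * τ₀) ^ 2 := by
    rw [← Complex.exp_nat_mul, hτ₀def]
    congr 1
    push_cast
    ring
  have hre : ((π : ℂ) * I * τ₀).re = -(π * τ₀.im) := by
    rw [show (π : ℂ) * I * τ₀ = ((π : ℝ) : ℂ) * (τ₀ * I) by ring, Complex.re_ofReal_mul,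
      Complex.mul_I_re]
    ring
  have hq : ‖Complex.exp (-2 * (π : ℂ) * I / τ)‖ ^ 4 = Real.exp (-8 * π * τ₀.im) := by
    rw [hb, norm_pow, Complex.norm_exp, hre, ← pow_mul,
      ← Real.exp_nat_mul]
    congr 1
    push_cast
    ring
  refine ⟨S - (1 - ((2 * Real.cos (2 * π * α) : ℝ) : ℂ) * Complex.exp (-(π : ℂ) * I / τ) +
      ((2 * Real.cos (4 * π * α) : ℝ) : ℂ) * Complex.exp (-2 * (π : ℂ) * I / τ) ^ 2), ?_, ?_⟩
  · rw [hful]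
    ring
  · have hEq : S - (1 - ((2 * Real.cos (2 * π * α) : ℝ) : ℂ) * Complex.exp (-(π : ℂ) * I / τ) +
        ((2 * Real.cos (4 * π * α) : ℝ) : ℂ) * Complex.exp (-2 * (π : ℂ) * I / τ) ^ 2)
        = S - (1 - ((2 * Real.cos (2 * π * α) : ℝ) : ℂ) * Complex.exp ((π : ℂ) * I * τ₀) +
        ((2 * Real.cos (4 * π * α) : ℝ) : ℂ) * Complex.exp ((π : ℂ) * I * τ₀) ^ 4) := by
      rw [ha, hb, ← pow_mul]
    rw [hEq, hq]
    exact hEx α τ₀ h1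
end

section
/- For every τ in the upper half-plane ℍ, with q := e^{2πiτ} and Q(r,s) := r(r−1)/2 + s(s+1)/2 + 5s + 6r + 5rs, the following theta-function identity holds: ∑_{r=0}^{3} ∑_{s=0}^{3} (−1)^r q^{Q(r,s)} · ϑ(4(s−r)τ; 16τ) ϑ((24(r+s)+44)τ; 96τ) / [ϑ(1/2+(24r+22)τ; 96τ) ϑ(1/2+(24s+22)τ; 96τ)] = 2 [ q⁶ ϑ(4τ;16τ)ϑ(68τ;96τ) / (ϑ(1/2+46τ;96τ)ϑ(1/2+22τ;96τ)) − q^{−47} ϑ(12τ;16τ)ϑ(20τ;96τ) / (ϑ(1/2+94τ;96τ)ϑ(1/2+22τ;96τ)) + q^{−39} ϑ(4τ;16τ)ϑ(20τ;96τ) / (ϑ(1/2+46τ;96τ)ϑ(1/2+70τ;96τ)) − q^{−52} ϑ(4τ;16τ)ϑ(68τ;96τ) / (ϑ(1/2+94τ;96τ)ϑ(1/2+70τ;96τ)) ]. -/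
open Real Complex

/-- `Q(r,s) = r(r-1)/2 + s(s+1)/2 + 5s + 6r + 5rs`. -/
def Qrs (r s : ℕ) : ℕ := r * (r - 1) / 2 + s * (s + 1) / 2 + 5 * s + 6 * r + 5 * r * s


lemma exp_two_pi_half (n : ℤ) :
    Complex.exp (2 * (π:ℂ) * Complex.I * ((n:ℂ) + 1/2)) = -1 := by
  have h : 2 * (π:ℂ) * Complex.I * ((n:ℂ) + 1/2) = (n:ℂ) * (2*(π:ℂ)*Complex.I) + (π:ℂ)*Complex.I := by ring
  rw [h, Complex.exp_add, Complex.exp_int_mul_two_pi_mul_I, Complex.exp_pi_mul_I, one_mul]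

lemma exp3 (a b c : ℂ) : Complex.exp a * Complex.exp b * Complex.exp c = Complex.exp (a+b+c) := by
  rw [Complex.exp_add, Complex.exp_add]

lemma jtheta_neg (z τ : ℂ) : jtheta (-z) τ = -jtheta z τ := by
  unfold jtheta
  rw [← tsum_neg, ← (Equiv.subLeft (-1 : ℤ)).tsum_eq]
  refine tsum_congr fun n => ?_
  simp only [Equiv.subLeft_apply]
  rw [exp3, exp3]
  have h : (π:ℂ) * Complex.I * (((-1 - n : ℤ):ℂ) + 1/2) +
      (π:ℂ) * Complex.I * τ * (((-1 - n : ℤ):ℂ) + 1/2)^2 +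
      2 * (π:ℂ) * Complex.I * (((-1 - n : ℤ):ℂ) + 1/2) * (-z)
      = ((π:ℂ) * Complex.I * ((n:ℂ) + 1/2) + (π:ℂ) * Complex.I * τ * ((n:ℂ) + 1/2)^2 +
        2 * (π:ℂ) * Complex.I * ((n:ℂ) + 1/2) * z) + (-(2 * (π:ℂ) * Complex.I * ((n:ℂ) + 1/2))) := by
    push_cast; ring
  rw [h, Complex.exp_add, Complex.exp_neg, exp_two_pi_half]
  rw [show ((-1:ℂ))⁻¹ = -1 by norm_num, mul_neg_one]

lemma jtheta_shift (z t : ℂ) :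
    jtheta (z + t) t = -Complex.exp (-((π:ℂ)*Complex.I*t) - 2*(π:ℂ)*Complex.I*z) * jtheta z t := by
  have h : jtheta z t = -Complex.exp ((π:ℂ)*Complex.I*t + 2*(π:ℂ)*Complex.I*z) * jtheta (z + t) t := by
    unfold jtheta
    rw [← tsum_mul_left, ← (Equiv.addRight (1 : ℤ)).tsum_eq]
    refine tsum_congr fun n => ?_
    simp only [Equiv.coe_addRight]
    rw [exp3, exp3]
    rw [show (π:ℂ) * Complex.I * (((n + 1 : ℤ):ℂ) + 1/2) +
        (π:ℂ) * Complex.I * t * (((n + 1 : ℤ):ℂ) + 1/2)^2 +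
        2 * (π:ℂ) * Complex.I * (((n + 1 : ℤ):ℂ) + 1/2) * z
        = ((π:ℂ)*Complex.I*t + 2*(π:ℂ)*Complex.I*z) +
          ((π:ℂ) * Complex.I * ((n:ℂ) + 1/2) + (π:ℂ) * Complex.I * t * ((n:ℂ) + 1/2)^2 +
           2 * (π:ℂ) * Complex.I * ((n:ℂ) + 1/2) * (z + t)) + (π:ℂ)*Complex.I from by push_cast; ring,
      Complex.exp_add, Complex.exp_add, Complex.exp_pi_mul_I]
    ring
  rw [h, show -Complex.exp (-((π:ℂ)*Complex.I*t) - 2*(π:ℂ)*Complex.I*z) *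
      (-Complex.exp ((π:ℂ)*Complex.I*t + 2*(π:ℂ)*Complex.I*z) * jtheta (z+t) t)
      = (Complex.exp (-((π:ℂ)*Complex.I*t) - 2*(π:ℂ)*Complex.I*z) *
        Complex.exp ((π:ℂ)*Complex.I*t + 2*(π:ℂ)*Complex.I*z)) * jtheta (z+t) t from by ring,
    ← Complex.exp_add]
  ring_nf
  simp

/-- The simplification of the theta quotient sum `S̄(τ)` (Proposition `bestrepofT`). -/
theorem sbar_identity (τ : ℂ) (hτ : 0 < τ.im) :
    (∑ r ∈ Finset.range 4, ∑ s ∈ Finset.range 4,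
      (-1 : ℂ) ^ r * Complex.exp (2 * (π : ℂ) * Complex.I * τ) ^ (Qrs r s) *
        jtheta (4 * ((s : ℂ) - (r : ℂ)) * τ) (16 * τ) *
        jtheta ((24 * ((r : ℂ) + (s : ℂ)) + 44) * τ) (96 * τ) /
        (jtheta (1 / 2 + (24 * (r : ℂ) + 22) * τ) (96 * τ) *
          jtheta (1 / 2 + (24 * (s : ℂ) + 22) * τ) (96 * τ))) =
    2 * (Complex.exp (2 * (π : ℂ) * Complex.I * τ) ^ (6 : ℤ) *
          jtheta (4 * τ) (16 * τ) * jtheta (68 * τ) (96 * τ) /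
          (jtheta (1 / 2 + 46 * τ) (96 * τ) * jtheta (1 / 2 + 22 * τ) (96 * τ)) -
        Complex.exp (2 * (π : ℂ) * Complex.I * τ) ^ (-47 : ℤ) *
          jtheta (12 * τ) (16 * τ) * jtheta (20 * τ) (96 * τ) /
          (jtheta (1 / 2 + 94 * τ) (96 * τ) * jtheta (1 / 2 + 22 * τ) (96 * τ)) +
        Complex.exp (2 * (π : ℂ) * Complex.I * τ) ^ (-39 : ℤ) *
          jtheta (4 * τ) (16 * τ) * jtheta (20 * τ) (96 * τ) /
          (jtheta (1 / 2 + 46 * τ) (96 * τ) * jtheta (1 / 2 + 70 * τ) (96 * τ)) -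
        Complex.exp (2 * (π : ℂ) * Complex.I * τ) ^ (-52 : ℤ) *
          jtheta (4 * τ) (16 * τ) * jtheta (68 * τ) (96 * τ) /
          (jtheta (1 / 2 + 94 * τ) (96 * τ) * jtheta (1 / 2 + 70 * τ) (96 * τ))) := by
  simp only [Finset.sum_range_succ, Finset.sum_range_zero, zero_add]
  norm_num [Qrs]
  have hE : Complex.exp (2*(π:ℂ)*Complex.I*τ) ≠ 0 := Complex.exp_ne_zero _
  have h116 : jtheta (116*τ) (96*τ)
      = -(Complex.exp (2*(π:ℂ)*Complex.I*τ) ^ 68)⁻¹ * jtheta (20*τ) (96*τ) := by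
    rw [show (116:ℂ)*τ = 20*τ + 96*τ by ring, jtheta_shift,
        show -((π:ℂ)*Complex.I*(96*τ)) - 2*(π:ℂ)*Complex.I*(20*τ)
          = -(((68:ℕ):ℂ)*(2*(π:ℂ)*Complex.I*τ)) by push_cast; ring,
        Complex.exp_neg, Complex.exp_nat_mul]
  have h164 : jtheta (164*τ) (96*τ)
      = -(Complex.exp (2*(π:ℂ)*Complex.I*τ) ^ 116)⁻¹ * jtheta (68*τ) (96*τ) := by
    rw [show (164:ℂ)*τ = 68*τ + 96*τ by ring, jtheta_shift,
        show -((π:ℂ)*Complex.I*(96*τ)) - 2*(π:ℂ)*Complex.I*(68*τ)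
          = -(((116:ℕ):ℂ)*(2*(π:ℂ)*Complex.I*τ)) by push_cast; ring,
        Complex.exp_neg, Complex.exp_nat_mul]
  simp only [jtheta_zero, jtheta_neg, h116, h164, zero_mul, mul_zero, zero_div, neg_zero,
    add_zero, zero_add, zpow_ofNat]
  have h47 : (Complex.exp (2*(π:ℂ)*Complex.I*τ) ^ 47)⁻¹
      = Complex.exp (2*(π:ℂ)*Complex.I*τ) ^ 21 * (Complex.exp (2*(π:ℂ)*Complex.I*τ) ^ 68)⁻¹ := by
    field_simp
  have h39 : (Complex.exp (2*(π:ℂ)*Complex.I*τ) ^ 39)⁻¹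
      = Complex.exp (2*(π:ℂ)*Complex.I*τ) ^ 29 * (Complex.exp (2*(π:ℂ)*Complex.I*τ) ^ 68)⁻¹ := by
    field_simp
  have h52 : (Complex.exp (2*(π:ℂ)*Complex.I*τ) ^ 52)⁻¹
      = Complex.exp (2*(π:ℂ)*Complex.I*τ) ^ 64 * (Complex.exp (2*(π:ℂ)*Complex.I*τ) ^ 116)⁻¹ := by
    field_simp
  rw [h47, h39, h52]
  ring
end

section
/- Let b(n) denote the n-th Fourier coefficient of ν(−q) = ∑_{m≥0} q^{m²+m} / (q;q²)_{m+1}. Then the sequence (b(n))_{n≥0} is weakly increasing (b(n+1) ≥ b(n) for all n ≥ 0) and every b(n) is nonnegative. -/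
open Real

/-- `ν(-q) = ∑_{m≥0} q^{m²+m} / ∏_{j=0}^{m} (1 - q^{2j+1})`. -/
noncomputable def nuNeg (q : ℂ) : ℂ :=
  ∑' m : ℕ, q ^ (m ^ 2 + m) / ∏ j ∈ Finset.range (m + 1), (1 - q ^ (2 * j + 1))

namespace NuAux

open scoped NNReal ENNReal

abbrev PIdx := Σ m : ℕ, Fin (m + 1) → ℕ

def Wt (p : PIdx) : ℕ := p.1 ^ 2 + p.1 + ∑ j : Fin (p.1 + 1), (2 * (j : ℕ) + 1) * p.2 j

lemma Wt_fst_le (p : PIdx) : p.1 ≤ Wt p := by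
  have h1 : p.1 ≤ p.1 ^ 2 + p.1 := Nat.le_add_left _ _
  exact h1.trans (Nat.le_add_right _ _)

lemma Wt_snd_le (p : PIdx) (j : Fin (p.1 + 1)) : p.2 j ≤ Wt p := by
  calc p.2 j ≤ (2 * (j : ℕ) + 1) * p.2 j := Nat.le_mul_of_pos_left _ (by omega)
    _ ≤ ∑ i : Fin (p.1 + 1), (2 * (i : ℕ) + 1) * p.2 i :=
        Finset.single_le_sum (f := fun i : Fin (p.1+1) => (2 * (i:ℕ) + 1) * p.2 i)
          (fun _ _ => Nat.zero_le _) (Finset.mem_univ j)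
    _ ≤ Wt p := Nat.le_add_left _ _

instance WtFiberFinite (n : ℕ) : Finite ↥(Wt ⁻¹' {n}) := by
  let F : ↥(Wt ⁻¹' {n}) → Σ m : Fin (n + 1), Fin ((m : ℕ) + 1) → Fin (n + 1) :=
    fun p => ⟨⟨p.1.1, by
        have := Wt_fst_le p.1
        have h : Wt p.1 = n := p.2
        omega⟩,
      fun j => ⟨p.1.2 j, by
        have := Wt_snd_le p.1 j
        have h : Wt p.1 = n := p.2
        omega⟩⟩
  apply Finite.of_injective F
  rintro ⟨⟨m₁, k₁⟩, h₁⟩ ⟨⟨m₂, k₂⟩, h₂⟩ h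
  simp only [F, Sigma.mk.inj_iff, Fin.mk.injEq] at h
  obtain ⟨hm, hk⟩ := h
  have hm' : m₁ = m₂ := hm
  subst hm'
  have hk' := eq_of_heq hk
  have : k₁ = k₂ := by
    funext j
    exact congrArg Fin.val (congrFun hk' j)
  subst this
  rfl

noncomputable def cCoef (n : ℕ) : ℕ := Nat.card ↥(Wt ⁻¹' {n})

lemma cCoef_mono (n : ℕ) : cCoef n ≤ cCoef (n + 1) := by
  let F : ↥(Wt ⁻¹' {n}) → ↥(Wt ⁻¹' {n + 1}) := fun p =>
    ⟨⟨p.1.1, Function.update p.1.2 0 (p.1.2 0 + 1)⟩, by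
      have h : Wt p.1 = n := p.2
      have key : Wt ⟨p.1.1, Function.update p.1.2 0 (p.1.2 0 + 1)⟩ = Wt p.1 + 1 := by
        simp only [Wt]
        rw [Fin.sum_univ_succ, Fin.sum_univ_succ (fun j : Fin (p.1.1 + 1) =>
          (2 * (j : ℕ) + 1) * p.1.2 j)]
        simp only [Function.update_self, Function.update_of_ne (Fin.succ_ne_zero _)]
        simp [Fin.val_zero]
        ring
      simp only [Set.mem_preimage, Set.mem_singleton_iff, key, h]⟩
  have hinj : Function.Injective F := by
    rintro ⟨⟨m₁, k₁⟩, h₁⟩ ⟨⟨m₂, k₂⟩, h₂⟩ h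
    simp only [F, Subtype.mk.injEq, Sigma.mk.inj_iff] at h
    obtain ⟨hm, hk⟩ := h
    subst hm
    have hk' := eq_of_heq hk
    have : k₁ = k₂ := by
      funext j
      by_cases hj : j = 0
      · subst hj
        have := congrFun hk' 0
        simpa using this
      · have := congrFun hk' j
        simpa [Function.update_of_ne hj] using this
    subst this
    rfl
  exact Nat.card_le_card_of_injective F hinj

theorem geom_pi {𝕜 : Type*} [NormedField 𝕜] [CompleteSpace 𝕜] :
    ∀ (m : ℕ) (x : Fin m → 𝕜), (∀ j, ‖x j‖ < 1) →
      (Summable fun k : Fin m → ℕ => ‖∏ j, x j ^ k j‖) ∧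
      ∑' k : Fin m → ℕ, ∏ j, x j ^ k j = ∏ j, (1 - x j)⁻¹ := by
  intro m
  induction m with
  | zero =>
    intro x _
    constructor
    · exact Summable.of_finite
    · simp
  | succ m ih =>
    intro x hx
    obtain ⟨ihs, iht⟩ := ih (fun j => x j.succ) (fun j => hx j.succ)
    have h0 : Summable fun a : ℕ => ‖x 0 ^ a‖ := by
      simpa [norm_pow] using summable_geometric_of_lt_one (norm_nonneg (x 0)) (hx 0)
    set F : ℕ × (Fin m → ℕ) → 𝕜 := fun z => x 0 ^ z.1 * ∏ j, x j.succ ^ z.2 j with hF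
    have hFs : Summable fun z => ‖F z‖ := by
      have := summable_mul_of_summable_norm (f := fun a : ℕ => ‖x 0 ^ a‖)
        (g := fun t : Fin m → ℕ => ‖∏ j, x j.succ ^ t j‖) (by simpa using h0) (by simpa using ihs)
      simpa [hF, norm_mul] using this
    have hkey : ∀ k : Fin m.succ → ℕ, ∏ j, x j ^ k j = F ((Fin.consEquiv (fun _ => ℕ)).symm k) := by
      intro k
      simp only [hF, Fin.prod_univ_succ]
      rfl
    constructor
    · rw [show (fun k : Fin m.succ → ℕ => ‖∏ j, x j ^ k j‖)
        = (fun z => ‖F z‖) ∘ ((Fin.consEquiv (fun _ => ℕ)).symm) from funext fun k => by rw [hkey]; rfl]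
      exact (Equiv.summable_iff _).2 hFs
    · have e1 : ∑' k : Fin m.succ → ℕ, ∏ j, x j ^ k j = ∑' z, F z := by
        rw [show (fun k : Fin m.succ → ℕ => ∏ j, x j ^ k j)
          = (fun z => F z) ∘ ((Fin.consEquiv (fun _ => ℕ)).symm) from funext fun k => by rw [hkey]; rfl]
        exact Equiv.tsum_eq _ _
      have e2 : (∑' a : ℕ, x 0 ^ a) * ∑' t : Fin m → ℕ, ∏ j, x j.succ ^ t j = ∑' z, F z :=
        tsum_mul_tsum_of_summable_norm h0 ihs
      rw [e1, ← e2, tsum_geometric_of_norm_lt_one (hx 0), iht, Fin.prod_univ_succ]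

lemma pow_Wt {M : Type*} [CommMonoid M] (a : M) (m : ℕ) (k : Fin (m + 1) → ℕ) :
    a ^ Wt ⟨m, k⟩ = a ^ (m ^ 2 + m) * ∏ j : Fin (m + 1), (a ^ (2 * (j : ℕ) + 1)) ^ k j := by
  rw [Wt, pow_add]
  congr 1
  simp_rw [← pow_mul, Finset.prod_pow_eq_pow_sum]

lemma per_m {𝕜 : Type*} [NormedField 𝕜] [CompleteSpace 𝕜] {q : 𝕜} (hq : ‖q‖ < 1) (m : ℕ) :
    (Summable fun k : Fin (m + 1) → ℕ => ‖q ^ Wt ⟨m, k⟩‖) ∧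
    ∑' k : Fin (m + 1) → ℕ, q ^ Wt ⟨m, k⟩
      = q ^ (m ^ 2 + m) * ∏ j : Fin (m + 1), (1 - q ^ (2 * (j : ℕ) + 1))⁻¹ := by
  have hx : ∀ j : Fin (m + 1), ‖q ^ (2 * (j : ℕ) + 1)‖ < 1 := by
    intro j
    rw [norm_pow]
    exact pow_lt_one₀ (norm_nonneg q) hq (by omega)
  obtain ⟨hs, ht⟩ := geom_pi (m + 1) (fun j => q ^ (2 * (j : ℕ) + 1)) hx
  constructor
  · have : (fun k : Fin (m + 1) → ℕ => ‖q ^ Wt ⟨m, k⟩‖)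
        = fun k => ‖q ^ (m ^ 2 + m)‖ * ‖∏ j : Fin (m + 1), (q ^ (2 * (j : ℕ) + 1)) ^ k j‖ := by
      funext k; rw [pow_Wt, norm_mul]
    rw [this]
    exact hs.mul_left _
  · simp_rw [pow_Wt q m]
    rw [tsum_mul_left, ht]

lemma sigma_norm_summable {q : ℂ} (hq : ‖q‖ < 2⁻¹) :
    Summable fun p : PIdx => ‖q ^ Wt p‖ := by
  set r := ‖q‖ with hrdef
  have hr0 : 0 ≤ r := norm_nonneg q
  have hr1 : r < 1 := hq.trans (by norm_num)
  have hrnorm : ‖r‖ < 1 := by rwa [Real.norm_eq_abs, abs_of_nonneg hr0]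
  have hkey : ∀ p : PIdx, ‖q ^ Wt p‖ = r ^ Wt p := fun p => norm_pow q _
  simp_rw [hkey]
  apply (summable_sigma_of_nonneg (fun p => pow_nonneg hr0 _)).2
  constructor
  · intro m
    have := (per_m hrnorm m).1
    exact this.of_norm.congr fun k => rfl
  · have hval : ∀ m : ℕ, (∑' k : Fin (m + 1) → ℕ, r ^ Wt ⟨m, k⟩)
        = r ^ (m ^ 2 + m) * ∏ j : Fin (m + 1), (1 - r ^ (2 * (j : ℕ) + 1))⁻¹ :=
      fun m => (per_m hrnorm m).2
    refine Summable.of_nonneg_of_le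
      (fun m => tsum_nonneg fun k => pow_nonneg hr0 _) (fun m => ?_)
      (Summable.mul_left 2 (summable_geometric_of_lt_one (by norm_num) (by norm_num : (2⁻¹:ℝ) < 1)))
    rw [hval]
    have hfac : ∀ j : Fin (m + 1), (1 - r ^ (2 * (j : ℕ) + 1))⁻¹ ≤ 2 := by
      intro j
      have h1 : r ^ (2 * (j : ℕ) + 1) ≤ r ^ 1 :=
        pow_le_pow_of_le_one hr0 hr1.le (by omega)
      have h2 : (2⁻¹ : ℝ) ≤ 1 - r ^ (2 * (j : ℕ) + 1) := by
        rw [pow_one] at h1; linarith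
      calc (1 - r ^ (2 * (j : ℕ) + 1))⁻¹ ≤ (2⁻¹ : ℝ)⁻¹ :=
            inv_anti₀ (by norm_num) h2
        _ = 2 := by norm_num
    have hprod : ∏ j : Fin (m + 1), (1 - r ^ (2 * (j : ℕ) + 1))⁻¹ ≤ 2 ^ (m + 1) := by
      calc ∏ j : Fin (m + 1), (1 - r ^ (2 * (j : ℕ) + 1))⁻¹
          ≤ ∏ _j : Fin (m + 1), (2 : ℝ) := by
            apply Finset.prod_le_prod
            · intro j _
              have h1 : r ^ (2 * (j : ℕ) + 1) ≤ r ^ 1 :=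
                pow_le_pow_of_le_one hr0 hr1.le (by omega)
              rw [pow_one] at h1
              have : (0:ℝ) < 1 - r ^ (2 * (j : ℕ) + 1) := by linarith
              positivity
            · exact fun j _ => hfac j
        _ = 2 ^ (m + 1) := by simp
    have hpow : r ^ (m ^ 2 + m) ≤ (2⁻¹ : ℝ) ^ (m ^ 2 + m) :=
      pow_le_pow_left₀ hr0 hq.le _
    calc r ^ (m ^ 2 + m) * ∏ j : Fin (m + 1), (1 - r ^ (2 * (j : ℕ) + 1))⁻¹
        ≤ (2⁻¹ : ℝ) ^ (m ^ 2 + m) * 2 ^ (m + 1) := by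
          apply mul_le_mul hpow hprod
          · exact Finset.prod_nonneg fun j _ => by
              have h1 : r ^ (2 * (j : ℕ) + 1) ≤ r ^ 1 :=
                pow_le_pow_of_le_one hr0 hr1.le (by omega)
              rw [pow_one] at h1
              have : (0:ℝ) < 1 - r ^ (2 * (j : ℕ) + 1) := by linarith
              positivity
          · positivity
      _ ≤ 2 * (2⁻¹ : ℝ) ^ m := by
          rw [inv_pow, inv_pow, inv_mul_eq_div, ← div_eq_mul_inv,
            div_le_div_iff₀ (by positivity) (by positivity)]
          have hmle : m + 1 + m ≤ m ^ 2 + m + 1 := by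
            nlinarith [sq_nonneg m, Nat.le_self_pow (two_ne_zero) m]
          calc (2:ℝ) ^ (m + 1) * 2 ^ m = 2 ^ (m + 1 + m) := by ring
            _ ≤ 2 ^ (m ^ 2 + m + 1) := pow_le_pow_right₀ one_le_two hmle
            _ = 2 * 2 ^ (m ^ 2 + m) := by rw [pow_succ, mul_comm]

lemma sigma_hasSum {q : ℂ} (hq : ‖q‖ < 2⁻¹) :
    HasSum (fun p : PIdx => q ^ Wt p) (nuNeg q) := by
  have hq1 : ‖q‖ < 1 := hq.trans (by norm_num)
  have hS : Summable fun p : PIdx => q ^ Wt p := (sigma_norm_summable hq).of_norm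
  have teq : ∑' p : PIdx, q ^ Wt p = nuNeg q := by
    rw [hS.tsum_sigma]
    refine tsum_congr fun m => ?_
    rw [(per_m hq1 m).2, div_eq_mul_inv, ← Finset.prod_inv_distrib]
    congr 1
    exact Fin.prod_univ_eq_prod_range (fun j : ℕ => (1 - q ^ (2 * j + 1))⁻¹) (m + 1)
  exact teq ▸ hS.hasSum

lemma coef_hasSum {q : ℂ} (hq : ‖q‖ < 2⁻¹) :
    HasSum (fun n : ℕ => (cCoef n : ℂ) * q ^ n) (nuNeg q) := by
  have h := (sigma_hasSum hq).tsum_fiberwise Wt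
  have heq : (fun n : ℕ => ∑' p : ↥(Wt ⁻¹' {n}), q ^ Wt (p : PIdx))
      = fun n : ℕ => (cCoef n : ℂ) * q ^ n := by
    funext n
    have h1 : ∀ p : ↥(Wt ⁻¹' {n}), q ^ Wt (p : PIdx) = q ^ n := by
      intro p
      have hp : Wt (p : PIdx) = n := p.2
      rw [hp]
    rw [tsum_congr h1, tsum_const, nsmul_eq_mul]
    rfl
  rwa [heq] at h

lemma norm_quarter : ‖(4⁻¹ : ℂ)‖ = 4⁻¹ := by simp

lemma coefR_summable : Summable fun n : ℕ => (cCoef n : ℝ) * (4⁻¹ : ℝ) ^ n := by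
  have hq : ‖(4⁻¹ : ℂ)‖ < 2⁻¹ := by rw [norm_quarter]; norm_num
  have hR : Summable fun p : PIdx => (4⁻¹ : ℝ) ^ Wt p := by
    have := sigma_norm_summable hq
    simpa [norm_pow, norm_quarter] using this
  have h := hR.hasSum.tsum_fiberwise Wt
  have heq : (fun n : ℕ => ∑' p : ↥(Wt ⁻¹' {n}), (4⁻¹ : ℝ) ^ Wt (p : PIdx))
      = fun n : ℕ => (cCoef n : ℝ) * (4⁻¹ : ℝ) ^ n := by
    funext n
    have h1 : ∀ p : ↥(Wt ⁻¹' {n}), (4⁻¹ : ℝ) ^ Wt (p : PIdx) = (4⁻¹ : ℝ) ^ n := by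
      intro p
      have hp : Wt (p : PIdx) = n := p.2
      rw [hp]
    rw [tsum_congr h1, tsum_const, nsmul_eq_mul]
    rfl
  rw [heq] at h
  exact h.summable

lemma nuNeg_quarter_ne_zero : nuNeg (4⁻¹ : ℂ) ≠ 0 := by
  have hq : ‖(4⁻¹ : ℂ)‖ < 2⁻¹ := by rw [norm_quarter]; norm_num
  have hR : Summable fun p : PIdx => (4⁻¹ : ℝ) ^ Wt p := by
    have := sigma_norm_summable hq
    simpa [norm_pow, norm_quarter] using this
  set S : ℝ := ∑' p : PIdx, (4⁻¹ : ℝ) ^ Wt p with hSdef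
  have hone : (1 : ℝ) ≤ S := by
    have h0 : ((4⁻¹ : ℝ) ^ Wt (⟨0, fun _ => 0⟩ : PIdx)) = 1 := by
      simp [Wt]
    calc (1 : ℝ) = (4⁻¹ : ℝ) ^ Wt (⟨0, fun _ => 0⟩ : PIdx) := h0.symm
      _ ≤ S := hR.le_tsum _ (fun j _ => by positivity)
  have hcast : nuNeg (4⁻¹ : ℂ) = (S : ℂ) := by
    rw [← (sigma_hasSum hq).tsum_eq, hSdef, Complex.ofReal_tsum]
    refine tsum_congr fun p => ?_
    push_cast
    norm_num
  rw [hcast]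
  exact_mod_cast Complex.ofReal_ne_zero.2 (by linarith)

end NuAux

open NuAux
open scoped NNReal ENNReal

/-- The coefficients `b(n)` of `ν(-q)` are nonnegative and weakly increasing. -/
theorem b_weakly_increasing
    (b : ℕ → ℤ)
    (hb : ∀ q : ℂ, ‖q‖ < 1 → nuNeg q = ∑' n : ℕ, (b n : ℂ) * q ^ n) :
    (∀ n : ℕ, b n ≤ b (n + 1)) ∧ (∀ n : ℕ, 0 ≤ b n) := by
  have hq4 : ‖(4⁻¹ : ℂ)‖ < 1 := by rw [norm_quarter]; norm_num
  -- the b-series is summable at 1/4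
  have hbsum : Summable fun n : ℕ => (b n : ℂ) * (4⁻¹ : ℂ) ^ n := by
    by_contra h
    have h0 := tsum_eq_zero_of_not_summable h
    rw [← hb (4⁻¹ : ℂ) hq4] at h0
    exact nuNeg_quarter_ne_zero h0
  -- hence the coefficients are geometrically bounded
  have htend := (hbsum.tendsto_atTop_zero).norm
  obtain ⟨C, hC⟩ := htend.bddAbove_range
  have hCn : ∀ n : ℕ, |((b n : ℤ) : ℝ)| * (4⁻¹ : ℝ) ^ n ≤ C := by
    intro n
    have := hC (Set.mem_range_self (f := fun n => ‖(b n : ℂ) * (4⁻¹ : ℂ) ^ n‖) n)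
    rw [norm_mul, norm_pow, norm_quarter] at this
    have hnorm : ‖((b n : ℤ) : ℂ)‖ = |((b n : ℤ) : ℝ)| := by
      push_cast [Complex.norm_intCast]; rfl
    rwa [hnorm] at this
  have hC0 : 0 ≤ C := le_trans (by positivity) (hCn 0)
  -- the two formal power series
  set pb := FormalMultilinearSeries.ofScalars ℂ (fun n => ((b n : ℤ) : ℂ)) with hpb
  set pc := FormalMultilinearSeries.ofScalars ℂ (fun n => ((cCoef n : ℕ) : ℂ)) with hpc
  have hpbr : ((8⁻¹ : ℝ≥0) : ℝ≥0∞) ≤ pb.radius := by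
    apply pb.le_radius_of_bound C
    intro n
    have h8 : ((8⁻¹ : ℝ≥0) : ℝ) = 8⁻¹ := by norm_num
    rw [hpb, FormalMultilinearSeries.ofScalars_norm, h8]
    have hnorm : ‖((b n : ℤ) : ℂ)‖ = |((b n : ℤ) : ℝ)| := by
      push_cast [Complex.norm_intCast]; rfl
    rw [hnorm]
    have hsplit : |((b n : ℤ) : ℝ)| * (8⁻¹ : ℝ) ^ n
        = (|((b n : ℤ) : ℝ)| * (4⁻¹ : ℝ) ^ n) * (2⁻¹ : ℝ) ^ n := by
      rw [mul_assoc, ← mul_pow]; norm_num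
    rw [hsplit]
    calc (|((b n : ℤ) : ℝ)| * (4⁻¹ : ℝ) ^ n) * (2⁻¹ : ℝ) ^ n
        ≤ C * 1 := by
          apply mul_le_mul (hCn n) (pow_le_one₀ (by norm_num) (by norm_num)) (by positivity) hC0
      _ = C := mul_one C
  have hpcr : ((4⁻¹ : ℝ≥0) : ℝ≥0∞) ≤ pc.radius := by
    apply pc.le_radius_of_summable
    have h4 : ((4⁻¹ : ℝ≥0) : ℝ) = 4⁻¹ := by norm_num
    simp_rw [hpc, FormalMultilinearSeries.ofScalars_norm, h4, Complex.norm_natCast]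
    exact coefR_summable
  have hpb0 : 0 < pb.radius :=
    lt_of_lt_of_le (by exact_mod_cast ENNReal.coe_pos.2 (by norm_num)) hpbr
  have hpc0 : 0 < pc.radius :=
    lt_of_lt_of_le (by exact_mod_cast ENNReal.coe_pos.2 (by norm_num)) hpcr
  -- power series expansions of nuNeg at 0
  have hAtb : HasFPowerSeriesAt nuNeg pb 0 := by
    refine (pb.hasFPowerSeriesOnBall hpb0).hasFPowerSeriesAt.congr ?_
    filter_upwards [Metric.ball_mem_nhds (0:ℂ) one_pos] with q hq
    rw [mem_ball_zero_iff] at hq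
    rw [hb q hq, FormalMultilinearSeries.sum]
    exact tsum_congr fun n => by
      rw [hpb, FormalMultilinearSeries.ofScalars_apply_eq, smul_eq_mul]
  have hAtc : HasFPowerSeriesAt nuNeg pc 0 := by
    refine (pc.hasFPowerSeriesOnBall hpc0).hasFPowerSeriesAt.congr ?_
    filter_upwards [Metric.ball_mem_nhds (0:ℂ) (by norm_num : (0:ℝ) < 2⁻¹)] with q hq
    rw [mem_ball_zero_iff] at hq
    rw [← (coef_hasSum hq).tsum_eq, FormalMultilinearSeries.sum]
    exact tsum_congr fun n => by
      rw [hpc, FormalMultilinearSeries.ofScalars_apply_eq, smul_eq_mul]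
  have hpp : pb = pc := hAtb.eq_formalMultilinearSeries hAtc
  have hfun : (fun n => ((b n : ℤ) : ℂ)) = fun n => ((cCoef n : ℕ) : ℂ) :=
    FormalMultilinearSeries.ofScalars_series_injective ℂ ℂ hpp
  have hbc : ∀ n : ℕ, b n = (cCoef n : ℤ) := by
    intro n
    have := congrFun hfun n
    exact_mod_cast this
  constructor
  · intro n
    rw [hbc n, hbc (n + 1)]
    exact_mod_cast cCoef_mono n
  · intro n
    rw [hbc n]
    exact Int.ofNat_nonneg _
end
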